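/- Assume the generating set S of a k-peg Hanoi group G satisfies condition (*). Suppose g ∈ G has a representation with nonempty essential set in which exactly M distinct elements of S ∪ S^{−1} occur. Then for every j ∈ X_k, either g|_j = g, or g|_j lies in the prenucleus with d(g|_j) < M. -/

import Mathlib

/-!
Common framework: automorphisms of the rooted tree `X_k^*`, root permutations,
sections, self-similar and contracting groups, Hanoi automorphisms and Hanoi
groups, following Makisumi–Stadnyk–Steinhurst, "Modified Hanoi Towers Groups
and Limit Spaces".

A word `x_n … x_1` over the alphabet `X_k = Fin k` is encoded as the list
`[x_n, …, x_1]`, whose head `x_n` is the first letter, i.e. the letter that a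
tree automorphism reads (and permutes) first.
-/

namespace Hanoi

/-- Words over the alphabet `X_k = Fin k`. -/
abbrev Word (k : ℕ) := List (Fin k)

/-- `e` is an automorphism of the rooted tree `X_k^*`: it fixes the root
(the empty word), preserves word length (levels) and preserves the tree
structure (words sharing an initial segment of length `n` are sent to words
sharing an initial segment of length `n`). -/
def IsTreeAut {k : ℕ} (e : Equiv.Perm (Word k)) : Prop :=
  (∀ w : Word k, (e w).length = w.length) ∧
    ∀ (w v : Word k) (n : ℕ), w.take n = v.take n → (e w).take n = (e v).take n

open Classical in
/-- The root permutation `σ_e` of a tree automorphism `e` (its action on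
one-letter words). -/
noncomputable def rootPerm {k : ℕ} (e : Equiv.Perm (Word k)) : Equiv.Perm (Fin k) :=
  if h : Function.Bijective (fun x : Fin k => ((e [x]).head?.getD x)) then
    Equiv.ofBijective _ h
  else 1

open Classical in
/-- The section `e|_x` of `e` at a letter `x`: the unique automorphism with
`e (x :: w) = σ_e x :: (e|_x) w` for all words `w`. -/
noncomputable def sec {k : ℕ} (e : Equiv.Perm (Word k)) (x : Fin k) : Equiv.Perm (Word k) :=
  if h : Function.Bijective (fun w : Word k => (e (x :: w)).tail) then
    Equiv.ofBijective _ h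
  else 1

/-- The section `e|_v` of `e` at a word `v = x_n … x_1`, defined by
`e|_v = (e|_{x_n})|_{x_{n-1} … x_1}`. -/
noncomputable def secW {k : ℕ} (e : Equiv.Perm (Word k)) : Word k → Equiv.Perm (Word k)
  | [] => e
  | x :: v => secW (sec e x) v

/-- A subgroup of the permutations of `X_k^*` is self-similar if it consists of
tree automorphisms and is closed under taking sections. -/
def IsSelfSimilar {k : ℕ} (G : Subgroup (Equiv.Perm (Word k))) : Prop :=
  (∀ g ∈ G, IsTreeAut g) ∧ ∀ g ∈ G, ∀ x : Fin k, sec g x ∈ G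

/-- A self-similar group `G` is contracting if there is a finite subset `N ⊆ G`
such that for every `g ∈ G` all sections of `g` at words of length at least
some `m` lie in `N`. -/
def IsContracting {k : ℕ} (G : Subgroup (Equiv.Perm (Word k))) : Prop :=
  ∃ N : Set (Equiv.Perm (Word k)), N.Finite ∧ N ⊆ (G : Set (Equiv.Perm (Word k))) ∧
    ∀ g ∈ G, ∃ m : ℕ, ∀ v : Word k, m ≤ v.length → secW g v ∈ N

/-- `N` is the nucleus of `G`: a smallest finite subset of `G` catching all
deep enough sections of every element of `G`. -/
def IsNucleus {k : ℕ} (G : Subgroup (Equiv.Perm (Word k)))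
    (N : Set (Equiv.Perm (Word k))) : Prop :=
  (N.Finite ∧ N ⊆ (G : Set (Equiv.Perm (Word k))) ∧
    ∀ g ∈ G, ∃ m : ℕ, ∀ v : Word k, m ≤ v.length → secW g v ∈ N) ∧
  ∀ N' : Set (Equiv.Perm (Word k)), N'.Finite → N' ⊆ (G : Set (Equiv.Perm (Word k))) →
    (∀ g ∈ G, ∃ m : ℕ, ∀ v : Word k, m ≤ v.length → secW g v ∈ N') → N ⊆ N'

/-- `a` is a Hanoi automorphism with set of inactive pegs `Q`: the section at
each active peg (element of the complement of `Q`) is trivial, the section at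
each inactive peg is `a` itself, and the root permutation fixes each inactive
peg. -/
def IsHanoiWith {k : ℕ} (a : Equiv.Perm (Word k)) (Q : Set (Fin k)) : Prop :=
  IsTreeAut a ∧ (∀ i ∉ Q, sec a i = 1) ∧ (∀ j ∈ Q, sec a j = a) ∧
    ∀ j ∈ Q, rootPerm a j = j

/-- `a` is a `k`-peg Hanoi automorphism. -/
def IsHanoiAut {k : ℕ} (a : Equiv.Perm (Word k)) : Prop := ∃ Q, IsHanoiWith a Q

open Classical in
/-- The set `Q_a` of inactive pegs of a Hanoi automorphism `a`; by convention
`Q_1 = X_k` (for `a ≠ 1` the set of inactive pegs is uniquely determined). -/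
noncomputable def inactivePegs {k : ℕ} (a : Equiv.Perm (Word k)) : Set (Fin k) :=
  if a = 1 then Set.univ
  else if h : ∃ Q, IsHanoiWith a Q then h.choose else ∅

/-- `S_{k,q}`: the set of Hanoi automorphisms over `X_k` with exactly `q`
inactive pegs. -/
noncomputable def hanoiSet (k q : ℕ) : Set (Equiv.Perm (Word k)) :=
  {a | IsHanoiAut a ∧ (inactivePegs a).ncard = q}

/-- `L = [s_n, …, s_1]` is a representation of `g` over the generating set `S`:
each `s_i ∈ S ∪ S⁻¹` and `g = s_n ⋯ s_2 s_1`. -/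
def IsRepOf {k : ℕ} (S : Set (Equiv.Perm (Word k))) (L : List (Equiv.Perm (Word k)))
    (g : Equiv.Perm (Word k)) : Prop :=
  (∀ s ∈ L, s ∈ S ∨ s⁻¹ ∈ S) ∧ L.prod = g

/-- The length `l(g)` of `g` with respect to `S`: the length of a minimal
representation (`0` for the identity). -/
noncomputable def repLength {k : ℕ} (S : Set (Equiv.Perm (Word k)))
    (g : Equiv.Perm (Word k)) : ℕ :=
  sInf {n | ∃ L, IsRepOf S L g ∧ L.length = n}

/-- The essential set of a representation: the intersection of the sets of
inactive pegs of its letters. -/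
noncomputable def essSet {k : ℕ} (L : List (Equiv.Perm (Word k))) : Set (Fin k) :=
  ⋂ s ∈ L, inactivePegs s

/-- The prenucleus of `G`: the set of elements `g ∈ G` with `g|_j = g` for some
letter `j`. -/
noncomputable def preNucleus {k : ℕ} (G : Subgroup (Equiv.Perm (Word k))) :
    Set (Equiv.Perm (Word k)) :=
  {g | g ∈ G ∧ ∃ j : Fin k, sec g j = g}

/-- The underlying function of the Hanoi Towers move `a_{ij}`: it changes the
first occurrence of `i` or `j` in a word by means of the transposition `(i j)`
and leaves the rest of the word unchanged. -/
def hanoiMoveFun {k : ℕ} (i j : Fin k) : Word k → Word k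
  | [] => []
  | x :: w => if x = i ∨ x = j then Equiv.swap i j x :: w else x :: hanoiMoveFun i j w

theorem hanoiMoveFun_involutive {k : ℕ} (i j : Fin k) :
    Function.Involutive (hanoiMoveFun i j) := by
  intro w
  induction w with
  | nil => rfl
  | cons x t ih =>
    by_cases h : x = i ∨ x = j
    · have h2 : Equiv.swap i j x = i ∨ Equiv.swap i j x = j := by
        rcases h with h | h <;> subst h <;> simp
      simp only [hanoiMoveFun, if_pos h, if_pos h2, Equiv.swap_apply_self]
    · simp only [hanoiMoveFun, if_neg h, ih]

/-- The Hanoi Towers move `a_{ij}`, as a permutation of `X_k^*`: its root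
permutation is the transposition `(i j)`, its sections at `i` and `j` are
trivial and all its other sections equal `a_{ij}` itself. -/
def hanoiMove {k : ℕ} (i j : Fin k) : Equiv.Perm (Word k) :=
  (hanoiMoveFun_involutive i j).toPerm

/-- The orbit of the letter `j` under the subgroup of `Sym(X_k)` generated by
the root permutations of the elements of `T`. -/
noncomputable def orbT {k : ℕ} (T : Finset (Equiv.Perm (Word k))) (j : Fin k) : Set (Fin k) :=
  MulAction.orbit (Subgroup.closure ((fun a => rootPerm a) '' (T : Set (Equiv.Perm (Word k))))) j

/-- The set `Fix(T)` of letters fixed by the root permutation of every element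
of `T`. -/
noncomputable def fixT {k : ℕ} (T : Finset (Equiv.Perm (Word k))) : Set (Fin k) :=
  {x | ∀ s ∈ T, rootPerm s x = x}

/-- Condition (*) on a generating set `S` of Hanoi automorphisms: for every
finite `T ⊆ S` with nonempty essential set and every letter `j ∉ Fix(T)`,
the orbit of `j` misses the inactive pegs of some element of `T`. -/
noncomputable def CondStar {k : ℕ} (S : Set (Equiv.Perm (Word k))) : Prop :=
  ∀ T : Finset (Equiv.Perm (Word k)), (T : Set (Equiv.Perm (Word k))) ⊆ S →
    (⋂ s ∈ T, inactivePegs s).Nonempty →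
    ∀ j : Fin k, j ∉ fixT T →
      ∃ s ∈ T, orbT T j ∩ inactivePegs s = ∅

open Classical in
/-- `d(g)`: the least number of distinct generators occurring among all
representations of `g` having nonempty essential set. -/
noncomputable def dCount {k : ℕ} (S : Set (Equiv.Perm (Word k)))
    (g : Equiv.Perm (Word k)) : ℕ :=
  sInf {M | ∃ L, IsRepOf S L g ∧ (essSet L).Nonempty ∧ L.toFinset.card = M}

/-- `S` is fully symmetric: for every non-identity `a ∈ S` and every
`φ ∈ Sym(X_k)`, the Hanoi automorphism `φ·a` with inactive pegs `φ(Q_a)` and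
root permutation `φ ∘ σ_a ∘ φ⁻¹` again lies in `S`. -/
noncomputable def FullySymmetric {k : ℕ} (S : Set (Equiv.Perm (Word k))) : Prop :=
  ∀ a ∈ S, a ≠ 1 → ∀ φ : Equiv.Perm (Fin k), ∀ b : Equiv.Perm (Word k),
    IsHanoiWith b (φ '' inactivePegs a) →
    rootPerm b = φ * rootPerm a * φ⁻¹ → b ∈ S

/-- The family `R̲_{k,n}`: the identity together with all Hanoi automorphisms
`a` such that (1) `Q_a ⊆ {m+1, …, m+n}` for some `m`, and (2) whenever
`i ∈ Q_a` the root permutation of `a` fixes `i-1, …, i-(n-1)`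
(all peg labels mod `k`). -/
noncomputable def Runder (k n : ℕ) : Set (Equiv.Perm (Word k)) :=
  {a | a = 1 ∨ (IsHanoiAut a ∧
    (∃ m : Fin k, ∀ q ∈ inactivePegs a, ∃ t : ℕ, 1 ≤ t ∧ t ≤ n ∧
      (q : ℕ) = ((m : ℕ) + t) % k) ∧
    ∀ i ∈ inactivePegs a, ∀ x : Fin k, ∀ t : ℕ, 1 ≤ t → t ≤ n - 1 →
      ((x : ℕ) + t) % k = (i : ℕ) → rootPerm a x = x)}

/-- The family `R̄_{k,n}`: the identity together with all Hanoi automorphisms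
`a` such that (1) `Q_a ⊆ {m+1, …, m+n}` for some `m`, and (2) whenever
`i ∈ Q_a` the root permutation of `a` fixes `i+1, …, i+(n-1)`
(all peg labels mod `k`). -/
noncomputable def Rover (k n : ℕ) : Set (Equiv.Perm (Word k)) :=
  {a | a = 1 ∨ (IsHanoiAut a ∧
    (∃ m : Fin k, ∀ q ∈ inactivePegs a, ∃ t : ℕ, 1 ≤ t ∧ t ≤ n ∧
      (q : ℕ) = ((m : ℕ) + t) % k) ∧
    ∀ i ∈ inactivePegs a, ∀ x : Fin k, ∀ t : ℕ, 1 ≤ t → t ≤ n - 1 →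
      (x : ℕ) = ((i : ℕ) + t) % k → rootPerm a x = x)}

/-- The finite word `x_m … x_1` (first letter `x_m`) read off from a
left-infinite sequence `… x_2 x_1`, encoded as `x : ℕ → Fin k` with
`x s = x_{s+1}`. -/
def wordOf {k : ℕ} (x : ℕ → Fin k) (m : ℕ) : Word k := (List.range m).reverse.map x

variable {k : ℕ} {e f : Equiv.Perm (Word k)}

lemma perm_apply_inv_self {α : Type*} (f : Equiv.Perm α) (x : α) : f (f⁻¹ x) = x :=
  f.apply_symm_apply x

lemma perm_inv_apply_self {α : Type*} (f : Equiv.Perm α) (x : α) : f⁻¹ (f x) = x :=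
  f.symm_apply_apply x

lemma isTreeAut_one : IsTreeAut (1 : Equiv.Perm (Word k)) :=
  ⟨fun _ => rfl, fun _ _ _ h => h⟩

lemma IsTreeAut.take_eq (he : IsTreeAut e) (w : Word k) (n : ℕ) :
    (e w).take n = e (w.take n) := by
  have h1 := he.2 w (w.take n) n (by simp [List.take_take])
  have h2 : (e (w.take n)).length ≤ n := by
    rw [he.1]; simp
  rw [h1, List.take_of_length_le h2]

lemma IsTreeAut.inv (he : IsTreeAut e) : IsTreeAut e⁻¹ := by
  constructor
  · intro w
    have := he.1 (e⁻¹ w)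
    rw [perm_apply_inv_self] at this
    exact this.symm
  · intro w v n h
    apply e.injective
    rw [← he.take_eq, ← he.take_eq, perm_apply_inv_self, perm_apply_inv_self, h]

lemma IsTreeAut.mul (he : IsTreeAut e) (hf : IsTreeAut f) : IsTreeAut (e * f) := by
  constructor
  · intro w; simp [Equiv.Perm.mul_apply, he.1, hf.1]
  · intro w v n h
    simp only [Equiv.Perm.mul_apply]
    exact he.2 _ _ _ (hf.2 _ _ _ h)


lemma IsTreeAut.rootFun_bij (he : IsTreeAut e) :
    Function.Bijective (fun x : Fin k => ((e [x]).head?.getD x)) := by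
  rw [← Finite.injective_iff_bijective]
  intro x y hxy
  obtain ⟨a, ha⟩ := List.length_eq_one_iff.mp (he.1 [x])
  obtain ⟨b, hb⟩ := List.length_eq_one_iff.mp (he.1 [y])
  simp only [ha, hb, List.head?_cons, Option.getD_some] at hxy
  have : e [x] = e [y] := by rw [ha, hb, hxy]
  simpa using e.injective this

lemma IsTreeAut.apply_singleton (he : IsTreeAut e) (x : Fin k) :
    e [x] = [rootPerm e x] := by
  rw [rootPerm, dif_pos he.rootFun_bij]
  obtain ⟨a, ha⟩ := List.length_eq_one_iff.mp (he.1 [x])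
  simp [Equiv.ofBijective_apply, ha]

lemma IsTreeAut.take_one_cons (he : IsTreeAut e) (x : Fin k) (w : Word k) :
    (e (x :: w)).take 1 = [rootPerm e x] := by
  rw [he.take_eq, show (x :: w).take 1 = [x] from rfl, he.apply_singleton]

lemma IsTreeAut.secFun_bij (he : IsTreeAut e) (x : Fin k) :
    Function.Bijective (fun w : Word k => (e (x :: w)).tail) := by
  constructor
  · intro w v hwv
    simp only at hwv
    have hw := he.take_one_cons x w
    have hv := he.take_one_cons x v
    have : e (x :: w) = e (x :: v) := by
      cases hew : e (x :: w) with
      | nil => simp [hew] at hw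
      | cons a t =>
        cases hev : e (x :: v) with
        | nil => simp [hev] at hv
        | cons b u =>
          rw [hew] at hw hwv; rw [hev] at hv hwv
          simp only [List.take_succ_cons, List.take_zero, List.cons.injEq, and_true] at hw hv
          simp only [List.tail_cons] at hwv
          rw [hwv, hw.trans hv.symm]
    simpa using e.injective this
  · intro u
    set v := e⁻¹ (rootPerm e x :: u) with hv
    have hlen : v.length = u.length + 1 := by
      have := he.inv.1 (rootPerm e x :: u)
      rw [hv]; simpa using this
    have htake : v.take 1 = [x] := by
      rw [he.inv.take_eq]
      simp only [List.take_succ_cons, List.take_zero]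
      have : e [x] = [rootPerm e x] := he.apply_singleton x
      rw [← this, perm_inv_apply_self]
    cases hvc : v with
    | nil => rw [hvc] at hlen; simp at hlen
    | cons a t =>
      rw [hvc] at htake
      simp only [List.take_succ_cons, List.take_zero, List.cons.injEq, and_true] at htake
      refine ⟨t, ?_⟩
      have : e (x :: t) = rootPerm e x :: u := by
        subst htake
        rw [← hvc, hv, perm_apply_inv_self]
      simp [this]

lemma IsTreeAut.apply_cons (he : IsTreeAut e) (x : Fin k) (w : Word k) :
    e (x :: w) = rootPerm e x :: sec e x w := by
  rw [sec, dif_pos (he.secFun_bij x)]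
  have h1 := he.take_one_cons x w
  cases hew : e (x :: w) with
  | nil => simp [hew] at h1
  | cons a t =>
    rw [hew] at h1
    simp only [List.take_succ_cons, List.take_zero, List.cons.injEq, and_true] at h1
    simp [Equiv.ofBijective_apply, hew, h1]

lemma sec_one (x : Fin k) : sec (1 : Equiv.Perm (Word k)) x = 1 := by
  have hb : Function.Bijective (fun w : Word k => ((1 : Equiv.Perm (Word k)) (x :: w)).tail) :=
    Function.bijective_id
  rw [sec, dif_pos hb]
  ext w
  rfl

lemma rootPerm_one : rootPerm (1 : Equiv.Perm (Word k)) = 1 := by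
  have hb : Function.Bijective
      (fun y : Fin k => (((1 : Equiv.Perm (Word k)) [y]).head?.getD y)) := Function.bijective_id
  rw [rootPerm, dif_pos hb]
  ext y
  rfl

lemma rootPerm_mul (he : IsTreeAut e) (hf : IsTreeAut f) (x : Fin k) :
    rootPerm (e * f) x = rootPerm e (rootPerm f x) := by
  have h1 := (he.mul hf).apply_singleton x
  have h2 : (e * f) [x] = [rootPerm e (rootPerm f x)] := by
    rw [Equiv.Perm.mul_apply, hf.apply_singleton, he.apply_singleton]
  rw [h2] at h1
  simpa using h1.symm

lemma sec_mul (he : IsTreeAut e) (hf : IsTreeAut f) (x : Fin k) :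
    sec (e * f) x = sec e (rootPerm f x) * sec f x := by
  apply Equiv.ext
  intro w
  have h1 := (he.mul hf).apply_cons x w
  have h2 : (e * f) (x :: w) = rootPerm (e * f) x :: sec e (rootPerm f x) (sec f x w) := by
    rw [Equiv.Perm.mul_apply, hf.apply_cons, he.apply_cons, rootPerm_mul he hf]
  rw [h2] at h1
  simpa using h1.symm

lemma rootPerm_inv (he : IsTreeAut e) (x : Fin k) :
    rootPerm e⁻¹ x = (rootPerm e)⁻¹ x := by
  have h1 : rootPerm e (rootPerm e⁻¹ x) = x := by
    have := rootPerm_mul he he.inv x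
    rw [mul_inv_cancel, rootPerm_one, Equiv.Perm.one_apply] at this
    exact this.symm
  exact Equiv.Perm.eq_inv_iff_eq.mpr h1

lemma sec_inv (he : IsTreeAut e) (x : Fin k) :
    sec e⁻¹ x = (sec e (rootPerm e⁻¹ x))⁻¹ := by
  have h := sec_mul he he.inv x
  rw [mul_inv_cancel, sec_one] at h
  exact (mul_eq_one_iff_inv_eq.mp h.symm).symm


variable {a : Equiv.Perm (Word k)} {Q Q' : Set (Fin k)}

lemma IsHanoiWith.inv (h : IsHanoiWith a Q) : IsHanoiWith a⁻¹ Q := by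
  obtain ⟨ht, hout, hin, hfix⟩ := h
  have hfix' : ∀ j ∈ Q, rootPerm a⁻¹ j = j := by
    intro j hj
    rw [rootPerm_inv ht, Equiv.Perm.inv_eq_iff_eq, hfix j hj]
  refine ⟨ht.inv, ?_, ?_, hfix'⟩
  · intro i hi
    have hni : rootPerm a⁻¹ i ∉ Q := by
      intro hmem
      have h1 : rootPerm a (rootPerm a⁻¹ i) = rootPerm a⁻¹ i := hfix _ hmem
      have h2 : rootPerm a (rootPerm a⁻¹ i) = i := by
        rw [rootPerm_inv ht, perm_apply_inv_self]
      have h3 : rootPerm a⁻¹ i = i := h1.symm.trans h2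
      rw [h3] at hmem
      exact hi hmem
    rw [sec_inv ht, hout _ hni, inv_one]
  · intro j hj
    rw [sec_inv ht, hfix' j hj, hin j hj]

lemma IsHanoiWith.unique (h : IsHanoiWith a Q) (h' : IsHanoiWith a Q') (hne : a ≠ 1) :
    Q = Q' := by
  ext i
  constructor
  · intro hi
    by_contra hi'
    exact hne ((h.2.2.1 i hi).symm.trans (h'.2.1 i hi'))
  · intro hi
    by_contra hi'
    exact hne ((h'.2.2.1 i hi).symm.trans (h.2.1 i hi'))

lemma isHanoiWith_one : IsHanoiWith (1 : Equiv.Perm (Word k)) Set.univ :=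
  ⟨isTreeAut_one, fun i hi => absurd (Set.mem_univ i) hi, fun j _ => sec_one j,
    fun j _ => by rw [rootPerm_one]; rfl⟩

lemma isHanoiAut_one : IsHanoiAut (1 : Equiv.Perm (Word k)) := ⟨_, isHanoiWith_one⟩

lemma inactivePegs_one : inactivePegs (1 : Equiv.Perm (Word k)) = Set.univ := by
  rw [inactivePegs, if_pos rfl]

lemma isHanoiWith_inactivePegs (ha : IsHanoiAut a) : IsHanoiWith a (inactivePegs a) := by
  by_cases h1 : a = 1
  · subst h1; rw [inactivePegs_one]; exact isHanoiWith_one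
  · rw [inactivePegs, if_neg h1]
    split
    · next h => exact h.choose_spec
    · next h => exact absurd ha h

lemma inactivePegs_eq (hne : a ≠ 1) (h : IsHanoiWith a Q) : inactivePegs a = Q :=
  (isHanoiWith_inactivePegs ⟨Q, h⟩).unique h hne

lemma IsHanoiAut.inv (ha : IsHanoiAut a) : IsHanoiAut a⁻¹ := by
  obtain ⟨Q, h⟩ := ha; exact ⟨Q, h.inv⟩

lemma inactivePegs_inv (ha : IsHanoiAut a) : inactivePegs a⁻¹ = inactivePegs a := by
  by_cases h1 : a = 1
  · subst h1; rw [inv_one]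
  · have hne : a⁻¹ ≠ 1 := fun h => h1 (by rw [← inv_inv a, h, inv_one])
    exact (inactivePegs_eq hne (isHanoiWith_inactivePegs ha).inv).trans rfl

lemma IsHanoiAut.isTreeAut (ha : IsHanoiAut a) : IsTreeAut a :=
  (isHanoiWith_inactivePegs ha).1

lemma sec_of_mem (ha : IsHanoiAut a) {j : Fin k} (hj : j ∈ inactivePegs a) : sec a j = a :=
  (isHanoiWith_inactivePegs ha).2.2.1 j hj

lemma rootPerm_of_mem (ha : IsHanoiAut a) {j : Fin k} (hj : j ∈ inactivePegs a) :
    rootPerm a j = j :=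
  (isHanoiWith_inactivePegs ha).2.2.2 j hj

lemma sec_of_not_mem (ha : IsHanoiAut a) {j : Fin k} (hj : j ∉ inactivePegs a) : sec a j = 1 :=
  (isHanoiWith_inactivePegs ha).2.1 j hj


/-- The list of sections of the letters of `L` at the running images of `j`. -/
noncomputable def secList {k : ℕ} : List (Equiv.Perm (Word k)) → Fin k →
    List (Equiv.Perm (Word k))
  | [], _ => []
  | s :: L, j => sec s (rootPerm L.prod j) :: secList L j

variable {L : List (Equiv.Perm (Word k))} {j : Fin k}

lemma isTreeAut_prod (h : ∀ s ∈ L, IsTreeAut s) : IsTreeAut L.prod := by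
  induction L with
  | nil => exact isTreeAut_one
  | cons s L ih =>
    rw [List.prod_cons]
    exact (h s (List.mem_cons_self)).mul (ih fun t ht => h t (List.mem_cons_of_mem s ht))

lemma secList_prod (h : ∀ s ∈ L, IsTreeAut s) : (secList L j).prod = sec L.prod j := by
  induction L with
  | nil => simp [secList, sec_one]
  | cons s L ih =>
    have hs := h s (List.mem_cons_self)
    have hL : ∀ t ∈ L, IsTreeAut t := fun t ht => h t (List.mem_cons_of_mem s ht)
    rw [secList, List.prod_cons, List.prod_cons, sec_mul hs (isTreeAut_prod hL), ih hL]

lemma rootPerm_prod_mem {O : Set (Fin k)} (h : ∀ s ∈ L, IsTreeAut s)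
    (hO : ∀ s ∈ L, ∀ x ∈ O, rootPerm s x ∈ O) (hj : j ∈ O) : rootPerm L.prod j ∈ O := by
  induction L with
  | nil => rw [List.prod_nil, rootPerm_one]; exact hj
  | cons s L ih =>
    have hs := h s (List.mem_cons_self)
    have hL : ∀ t ∈ L, IsTreeAut t := fun t ht => h t (List.mem_cons_of_mem s ht)
    rw [List.prod_cons, rootPerm_mul hs (isTreeAut_prod hL)]
    exact hO s (List.mem_cons_self) _
      (ih hL fun t ht => hO t (List.mem_cons_of_mem s ht))

lemma secList_mem {O : Set (Fin k)} (h : ∀ s ∈ L, IsTreeAut s)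
    (hO : ∀ s ∈ L, ∀ x ∈ O, rootPerm s x ∈ O) (hj : j ∈ O) :
    ∀ t ∈ secList L j, ∃ s ∈ L, ∃ x ∈ O, t = sec s x := by
  induction L with
  | nil => intro t ht; simp [secList] at ht
  | cons s L ih =>
    intro t ht
    have hL : ∀ u ∈ L, IsTreeAut u := fun u hu => h u (List.mem_cons_of_mem s hu)
    have hOL : ∀ u ∈ L, ∀ x ∈ O, rootPerm u x ∈ O :=
      fun u hu => hO u (List.mem_cons_of_mem s hu)
    rw [secList, List.mem_cons] at ht
    rcases ht with rfl | ht
    · exact ⟨s, List.mem_cons_self, rootPerm L.prod j,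
        rootPerm_prod_mem hL hOL hj, rfl⟩
    · obtain ⟨u, hu, x, hx, htt⟩ := ih hL hOL t ht
      exact ⟨u, List.mem_cons_of_mem s hu, x, hx, htt⟩

lemma sec_prod_fix {p : Fin k}
    (h : ∀ t ∈ L, IsHanoiAut t ∧ p ∈ inactivePegs t) : sec L.prod p = L.prod := by
  have htree : ∀ t ∈ L, IsTreeAut t := fun t ht => (h t ht).1.isTreeAut
  have hfix : ∀ t ∈ L, ∀ x ∈ ({p} : Set (Fin k)), rootPerm t x ∈ ({p} : Set (Fin k)) := by
    intro t ht x hx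
    rw [Set.mem_singleton_iff] at hx; subst hx
    rw [Set.mem_singleton_iff]
    exact rootPerm_of_mem (h t ht).1 (h t ht).2
  induction L with
  | nil => rw [List.prod_nil]; exact sec_one p
  | cons s L ih =>
    have hs := h s (List.mem_cons_self)
    have hL : ∀ t ∈ L, IsHanoiAut t ∧ p ∈ inactivePegs t :=
      fun t ht => h t (List.mem_cons_of_mem s ht)
    have hLtree : ∀ t ∈ L, IsTreeAut t := fun t ht => (hL t ht).1.isTreeAut
    have hrp : rootPerm L.prod p = p := by
      have := rootPerm_prod_mem (O := ({p} : Set (Fin k))) hLtree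
        (fun t ht x hx => hfix t (List.mem_cons_of_mem s ht) x hx) rfl
      simpa using this
    rw [List.prod_cons, sec_mul hs.1.isTreeAut (isTreeAut_prod hLtree), hrp,
      sec_of_mem hs.1 hs.2, ih hL hLtree (fun t ht x hx => hfix t (List.mem_cons_of_mem s ht) x hx)]


open Classical in
lemma list_prod_filter_ne_one (L : List (Equiv.Perm (Word k))) :
    (L.filter (fun t => t ≠ 1)).prod = L.prod := by
  induction L with
  | nil => rfl
  | cons s L ih =>
    by_cases hs : s = 1
    · subst hs
      rw [List.filter_cons_of_neg (by simp), List.prod_cons, one_mul, ih]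
    · rw [List.filter_cons_of_pos (by simpa using hs), List.prod_cons, List.prod_cons, ih]

open Classical in
lemma core_lemma {S : Set (Equiv.Perm (Word k))} {g : Equiv.Perm (Word k)}
    (hL : IsRepOf S L g) (hQ : (essSet L).Nonempty)
    (hHan : ∀ s ∈ L, IsHanoiAut s)
    (j : Fin k) (O : Set (Fin k)) (hjO : j ∈ O)
    (hOcl : ∀ s ∈ L, ∀ x ∈ O, rootPerm s x ∈ O)
    (P : Equiv.Perm (Word k) → Prop) (sstar : Equiv.Perm (Word k))
    (hsL : sstar ∈ L) (hPs : P sstar)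
    (hkill : ∀ s ∈ L, P s → ∀ x ∈ O, sec s x = 1) :
    sec g j ∈ preNucleus (Subgroup.closure S) ∧ dCount S (sec g j) < L.toFinset.card := by
  classical
  obtain ⟨hmem, hprod⟩ := hL
  have htree : ∀ s ∈ L, IsTreeAut s := fun s hs => (hHan s hs).isTreeAut
  set L' := secList L j with hL'
  set L'' := L'.filter (fun t => t ≠ 1) with hL''
  have hform : ∀ t ∈ L', t = 1 ∨ ∃ s ∈ L, ¬ P s ∧ t = s := by
    intro t ht
    obtain ⟨s, hs, x, hx, rfl⟩ := secList_mem htree hOcl hjO t ht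
    by_cases hxQ : x ∈ inactivePegs s
    · by_cases hPss : P s
      · exact Or.inl (hkill s hs hPss x hx)
      · exact Or.inr ⟨s, hs, hPss, sec_of_mem (hHan s hs) hxQ⟩
    · exact Or.inl (sec_of_not_mem (hHan s hs) hxQ)
  have hform'' : ∀ t ∈ L'', ∃ s ∈ L, ¬ P s ∧ t = s := by
    intro t ht
    rw [hL'', List.mem_filter] at ht
    rcases hform t ht.1 with h1 | h2
    · exact absurd h1 (by simpa using ht.2)
    · exact h2
  have hprod'' : L''.prod = sec g j := by
    rw [hL'', list_prod_filter_ne_one, hL', secList_prod htree, hprod]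
  obtain ⟨p, hp⟩ := hQ
  have hpmem : ∀ s ∈ L, p ∈ inactivePegs s := by
    intro s hs
    exact Set.mem_iInter₂.mp hp s hs
  have hL''p : ∀ t ∈ L'', IsHanoiAut t ∧ p ∈ inactivePegs t := by
    intro t ht
    obtain ⟨s, hs, _, rfl⟩ := hform'' t ht
    exact ⟨hHan t hs, hpmem t hs⟩
  have hrep'' : IsRepOf S L'' (sec g j) := by
    refine ⟨?_, hprod''⟩
    intro t ht
    obtain ⟨s, hs, _, rfl⟩ := hform'' t ht
    exact hmem t hs
  have hness : (essSet L'').Nonempty := by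
    refine ⟨p, Set.mem_iInter₂.mpr ?_⟩
    intro t ht
    exact (hL''p t ht).2
  have hsub : L''.toFinset ⊆ L.toFinset.erase sstar := by
    intro t ht
    rw [List.mem_toFinset] at ht
    obtain ⟨s, hs, hPns, rfl⟩ := hform'' t ht
    rw [Finset.mem_erase, List.mem_toFinset]
    exact ⟨fun hcon => hPns (hcon ▸ hPs), hs⟩
  have hcard : L''.toFinset.card < L.toFinset.card :=
    lt_of_le_of_lt (Finset.card_le_card hsub)
      (Finset.card_erase_lt_of_mem (List.mem_toFinset.mpr hsL))
  refine ⟨⟨?_, p, ?_⟩, ?_⟩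
  · rw [← hprod'']
    apply Subgroup.list_prod_mem
    intro t ht
    obtain ⟨s, hs, _, rfl⟩ := hform'' t ht
    rcases hmem t hs with h | h
    · exact Subgroup.subset_closure h
    · exact inv_mem_iff.mp (Subgroup.subset_closure h)
  · rw [← hprod'', sec_prod_fix hL''p]
  · exact lt_of_le_of_lt (Nat.sInf_le ⟨L'', hrep'', hness, rfl⟩) hcard


lemma rootPerm_inv' (he : IsTreeAut e) : rootPerm e⁻¹ = (rootPerm e)⁻¹ :=
  Equiv.ext (rootPerm_inv he)


open Classical in
/-- Lemma: sections decrease the number of distinct generators.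
Assume `S` satisfies condition (*) and `g` has a representation with nonempty
essential set using exactly `M` distinct generators.  Then for every letter
`j`, either `g|_j = g`, or `g|_j` lies in the prenucleus with `d(g|_j) < M`. -/
theorem distinct_generators_lemma {k : ℕ} (S : Set (Equiv.Perm (Word k)))
    (hS1 : (1 : Equiv.Perm (Word k)) ∈ S) (hS : ∀ a ∈ S, IsHanoiAut a)
    (hstar : CondStar S) (g : Equiv.Perm (Word k))
    (L : List (Equiv.Perm (Word k))) (M : ℕ)
    (hL : IsRepOf S L g) (hQ : (essSet L).Nonempty) (hM : L.toFinset.card = M) :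
    ∀ j : Fin k, sec g j = g ∨
      (sec g j ∈ preNucleus (Subgroup.closure S) ∧ dCount S (sec g j) < M) := by
  classical
  intro j
  have hHan : ∀ s ∈ L, IsHanoiAut s := by
    intro s hs
    rcases hL.1 s hs with h | h
    · exact hS s h
    · have := (hS _ h).inv
      rwa [inv_inv] at this
  by_cases hall : ∀ s ∈ L, j ∈ inactivePegs s
  · left
    rw [← hL.2]
    exact sec_prod_fix (fun s hs => ⟨hHan s hs, hall s hs⟩)
  · right
    push_neg at hall
    obtain ⟨s₀, hs₀L, hs₀j⟩ := hall
    subst hM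
    by_cases hfix : ∀ s ∈ L, rootPerm s j = j
    · refine core_lemma hL hQ hHan j {j} rfl ?_ (fun s => j ∉ inactivePegs s) s₀ hs₀L hs₀j ?_
      · intro s hs x hx
        rw [Set.mem_singleton_iff] at hx
        subst hx
        rw [Set.mem_singleton_iff]
        exact hfix s hs
      · intro s hs hP x hx
        rw [Set.mem_singleton_iff] at hx
        subst hx
        exact sec_of_not_mem (hHan s hs) hP
    · push_neg at hfix
      obtain ⟨s₁, hs₁L, hs₁j⟩ := hfix
      set nrm : Equiv.Perm (Word k) → Equiv.Perm (Word k) :=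
        fun s => if s ∈ S then s else s⁻¹ with hnrm
      set T : Finset (Equiv.Perm (Word k)) := L.toFinset.image nrm with hT
      have hnrmS : ∀ s ∈ L, nrm s ∈ S := by
        intro s hs
        rcases hL.1 s hs with h | h
        · simpa [hnrm, h] using h
        · by_cases h' : s ∈ S
          · simpa [hnrm, h'] using h'
          · simpa [hnrm, h'] using h
      have hnrmQ : ∀ s ∈ L, inactivePegs (nrm s) = inactivePegs s := by
        intro s hs
        by_cases h' : s ∈ S
        · simp [hnrm, h']
        · simp only [hnrm, if_neg h']
          exact inactivePegs_inv (hHan s hs)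
      have hnrmρ : ∀ s ∈ L,
          rootPerm (nrm s) = rootPerm s ∨ rootPerm (nrm s) = (rootPerm s)⁻¹ := by
        intro s hs
        by_cases h' : s ∈ S
        · left; simp [hnrm, h']
        · right
          simp only [hnrm, if_neg h']
          exact rootPerm_inv' (hHan s hs).isTreeAut
      have hTS : (T : Set (Equiv.Perm (Word k))) ⊆ S := by
        intro t ht
        rw [Finset.mem_coe, hT, Finset.mem_image] at ht
        obtain ⟨s, hsmem, rfl⟩ := ht
        exact hnrmS s (List.mem_toFinset.mp hsmem)
      have hTQ : (⋂ s ∈ T, inactivePegs s).Nonempty := by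
        obtain ⟨p, hp⟩ := hQ
        refine ⟨p, Set.mem_iInter₂.mpr ?_⟩
        intro t ht
        rw [hT, Finset.mem_image] at ht
        obtain ⟨s, hsmem, rfl⟩ := ht
        rw [hnrmQ s (List.mem_toFinset.mp hsmem)]
        exact Set.mem_iInter₂.mp hp s (List.mem_toFinset.mp hsmem)
      have hjf : j ∉ fixT T := by
        intro hcon
        apply hs₁j
        have hmem : nrm s₁ ∈ T := by
          rw [hT, Finset.mem_image]
          exact ⟨s₁, List.mem_toFinset.mpr hs₁L, rfl⟩
        have h1 : rootPerm (nrm s₁) j = j := hcon (nrm s₁) hmem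
        rcases hnrmρ s₁ hs₁L with h | h
        · rwa [h] at h1
        · rw [h] at h1
          exact (Equiv.Perm.inv_eq_iff_eq.mp h1).symm
      obtain ⟨t₀, ht₀T, horb⟩ := hstar T hTS hTQ j hjf
      obtain ⟨sstar, hsstarmem, hsstar⟩ := Finset.mem_image.mp (hT ▸ ht₀T)
      refine core_lemma hL hQ hHan j (orbT T j) (MulAction.mem_orbit_self j) ?_
        (fun s => nrm s = t₀) sstar (List.mem_toFinset.mp hsstarmem) hsstar ?_
      · intro s hs x hx
        have himg : rootPerm (nrm s) ∈
            (fun a => rootPerm a) '' (T : Set (Equiv.Perm (Word k))) := by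
          refine ⟨nrm s, ?_, rfl⟩
          rw [Finset.mem_coe, hT, Finset.mem_image]
          exact ⟨s, List.mem_toFinset.mpr hs, rfl⟩
        have hρ : rootPerm s ∈ Subgroup.closure
            ((fun a => rootPerm a) '' (T : Set (Equiv.Perm (Word k)))) := by
          rcases hnrmρ s hs with h | h
          · rw [← h]; exact Subgroup.subset_closure himg
          · have h2 : rootPerm s = (rootPerm (nrm s))⁻¹ := by rw [h, inv_inv]
            rw [h2]
            exact inv_mem (Subgroup.subset_closure himg)
        obtain ⟨u, hu⟩ := MulAction.mem_orbit_iff.mp hx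
        refine MulAction.mem_orbit_iff.mpr ⟨⟨rootPerm s, hρ⟩ * u, ?_⟩
        rw [mul_smul, hu]
        rfl
      · intro s hs hP x hx
        apply sec_of_not_mem (hHan s hs)
        intro hxQ
        have hxt₀ : x ∈ inactivePegs t₀ := by
          rw [← hP, hnrmQ s hs]
          exact hxQ
        exact Set.eq_empty_iff_forall_notMem.mp horb x ⟨hx, hxt₀⟩



end Hanoi
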